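/- Let H be a vector space over ℂ and H⁺ ⊆ H a fixed subspace. Call a subspace K ⊆ H compact if K and H⁺ are commensurable, i.e. (H⁺ + K)/(H⁺ ∩ K) is finite dimensional, and call a subspace D ⊆ H discrete if there exists a compact subspace K such that D ∩ K = 0 and D + K = H. Then D is discrete if and only if for every compact subspace K, both D ∩ K and H/(D + K) are finite dimensional. -/
import Mathlib

set_option maxHeartbeats 1000000

section Aux

variable {H : Type*} [AddCommGroup H] [Module ℂ H]

/-- `B` modulo `A ∩ B`, as a quotient of the submodule `B`. -/
private def FDQ (B A : Submodule ℂ H) : Prop :=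
  FiniteDimensional ℂ (↥B ⧸ A.comap B.subtype)

private noncomputable def fdqEquiv (B A : Submodule ℂ H) :
    (↥B ⧸ A.comap B.subtype) ≃ₗ[ℂ] ↥(B.map A.mkQ) := by
  have h1 : A.comap B.subtype = LinearMap.ker (A.mkQ ∘ₗ B.subtype) := by
    rw [LinearMap.ker_comp, Submodule.ker_mkQ]
  have h2 : LinearMap.range (A.mkQ ∘ₗ B.subtype) = B.map A.mkQ := by
    rw [LinearMap.range_comp, Submodule.range_subtype]
  exact (Submodule.quotEquivOfEq _ _ h1).trans
    ((A.mkQ ∘ₗ B.subtype).quotKerEquivRange.trans (LinearEquiv.ofEq _ _ h2))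

private theorem fdq_iff (B A : Submodule ℂ H) :
    FDQ B A ↔ FiniteDimensional ℂ ↥(B.map A.mkQ) := by
  constructor
  · intro h; haveI : FiniteDimensional ℂ (↥B ⧸ A.comap B.subtype) := h
    exact (fdqEquiv B A).finiteDimensional
  · intro h; haveI : FiniteDimensional ℂ ↥(B.map A.mkQ) := h
    exact (fdqEquiv B A).symm.finiteDimensional

private theorem fdq_of_fd (B A : Submodule ℂ H) [FiniteDimensional ℂ ↥B] : FDQ B A :=
  inferInstanceAs (FiniteDimensional ℂ (↥B ⧸ A.comap B.subtype))

private theorem fdq_self (A : Submodule ℂ H) : FDQ A A := by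
  rw [fdq_iff, Submodule.mkQ_map_self]
  infer_instance

private theorem fdq_mono_num {B B' : Submodule ℂ H} (A : Submodule ℂ H) (h : B ≤ B')
    (hfd : FDQ B' A) : FDQ B A := by
  rw [fdq_iff] at hfd ⊢
  haveI := hfd
  exact Submodule.finiteDimensional_of_le (Submodule.map_mono h)

private theorem fdq_mono_den {A A' : Submodule ℂ H} (B : Submodule ℂ H) (h : A ⊓ B ≤ A')
    (hfd : FDQ B A) : FDQ B A' := by
  haveI : FiniteDimensional ℂ (↥B ⧸ A.comap B.subtype) := hfd
  have hle : A.comap B.subtype ≤ A'.comap B.subtype := by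
    intro x hx
    exact h (Submodule.mem_inf.mpr ⟨hx, x.2⟩)
  refine Module.Finite.of_surjective (Submodule.mapQ _ _ LinearMap.id hle) ?_
  intro x
  obtain ⟨y, rfl⟩ := Submodule.mkQ_surjective _ x
  exact ⟨Submodule.Quotient.mk y, by rw [Submodule.mkQ_apply, Submodule.mapQ_apply]; rfl⟩

private theorem fdq_sup {B₁ B₂ : Submodule ℂ H} (A : Submodule ℂ H)
    (h₁ : FDQ B₁ A) (h₂ : FDQ B₂ A) : FDQ (B₁ ⊔ B₂) A := by
  rw [fdq_iff] at h₁ h₂ ⊢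
  rw [Submodule.map_sup]
  haveI := h₁; haveI := h₂
  infer_instance

/-- A vector space with a finite-dimensional subspace with finite-dimensional quotient is
finite dimensional. -/
private theorem fd_of_fd_sub_quot {M : Type*} [AddCommGroup M] [Module ℂ M]
    (p : Submodule ℂ M) (h1 : FiniteDimensional ℂ ↥p) (h2 : FiniteDimensional ℂ (M ⧸ p)) :
    FiniteDimensional ℂ M := by
  obtain ⟨q, hq⟩ := p.exists_isCompl
  haveI := h1; haveI := h2
  haveI : FiniteDimensional ℂ ↥q := (Submodule.quotientEquivOfIsCompl p q hq).finiteDimensional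
  exact Module.Finite.equiv (Submodule.prodEquivOfIsCompl p q hq)

/-- If `S.map f` and `ker f` are finite dimensional, so is `S`. -/
private theorem fd_of_fd_ker_map {M N : Type*} [AddCommGroup M] [Module ℂ M]
    [AddCommGroup N] [Module ℂ N] (S : Submodule ℂ M) (f : M →ₗ[ℂ] N)
    (hker : FiniteDimensional ℂ ↥(LinearMap.ker f))
    (himg : FiniteDimensional ℂ ↥(S.map f)) : FiniteDimensional ℂ ↥S := by
  set g := f.domRestrict S with hg
  have hrange : LinearMap.range g = S.map f := LinearMap.range_domRestrict S f
  have hkfd : FiniteDimensional ℂ ↥(LinearMap.ker g) := by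
    haveI := hker
    have hle : (LinearMap.ker g).map S.subtype ≤ LinearMap.ker f := by
      rintro x ⟨y, hy, rfl⟩
      exact hy
    haveI : FiniteDimensional ℂ ↥((LinearMap.ker g).map S.subtype) :=
      Submodule.finiteDimensional_of_le hle
    exact (Submodule.equivMapOfInjective S.subtype S.injective_subtype
      (LinearMap.ker g)).symm.finiteDimensional
  have hqfd : FiniteDimensional ℂ (↥S ⧸ LinearMap.ker g) := by
    haveI : FiniteDimensional ℂ ↥(LinearMap.range g) := hrange ▸ himg
    exact g.quotKerEquivRange.symm.finiteDimensional
  exact fd_of_fd_sub_quot (LinearMap.ker g) hkfd hqfd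

private theorem fdq_trans {B A C : Submodule ℂ H} (h₁ : FDQ B A) (h₂ : FDQ A C) : FDQ B C := by
  rw [fdq_iff]
  set q : (H ⧸ C) →ₗ[ℂ] H ⧸ (A ⊔ C) :=
    Submodule.liftQ C (A ⊔ C).mkQ (by rw [Submodule.ker_mkQ]; exact le_sup_right) with hqdef
  have hker : LinearMap.ker q = A.map C.mkQ := by
    rw [hqdef, Submodule.ker_liftQ, Submodule.ker_mkQ, Submodule.map_sup,
      Submodule.mkQ_map_self, sup_bot_eq]
  have hkerfd : FiniteDimensional ℂ ↥(LinearMap.ker q) := by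
    rw [hker]
    exact (fdq_iff A C).mp h₂
  have himg : FiniteDimensional ℂ ↥((B.map C.mkQ).map q) := by
    have hcomp : (B.map C.mkQ).map q = B.map (A ⊔ C).mkQ := by
      rw [← Submodule.map_comp, hqdef, Submodule.liftQ_mkQ]
    rw [hcomp]
    exact (fdq_iff B (A ⊔ C)).mp (fdq_mono_den B (le_trans inf_le_left le_sup_left) h₁)
  exact fd_of_fd_ker_map (B.map C.mkQ) q hkerfd himg

private theorem fdq_top_iff (A : Submodule ℂ H) :
    FDQ ⊤ A ↔ FiniteDimensional ℂ (H ⧸ A) := by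
  rw [fdq_iff]
  have htop : (⊤ : Submodule ℂ H).map A.mkQ = ⊤ := by
    rw [Submodule.map_top, Submodule.range_mkQ]
  rw [htop]
  exact ⟨fun h => by haveI := h; exact Submodule.topEquiv.finiteDimensional,
    fun h => by haveI := h; exact Submodule.topEquiv.symm.finiteDimensional⟩

private theorem fd_of_fdq_disj {B A : Submodule ℂ H} (hd : A ⊓ B = ⊥) (h : FDQ B A) :
    FiniteDimensional ℂ ↥B := by
  have hc : A.comap B.subtype = ⊥ := by
    rw [eq_bot_iff]
    intro x hx
    have hmem : (x : H) ∈ A ⊓ B := Submodule.mem_inf.mpr ⟨hx, x.2⟩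
    rw [hd, Submodule.mem_bot] at hmem
    simpa [Submodule.mem_bot] using Subtype.ext hmem
  haveI : FiniteDimensional ℂ (↥B ⧸ A.comap B.subtype) := h
  exact (Submodule.quotEquivOfEqBot _ hc).finiteDimensional

/-- from commensurability (as `FDQ (A ⊔ B) (A ⊓ B)`) to `FDQ A B`. -/
private theorem fdq_of_comm {A B : Submodule ℂ H} (h : FDQ (A ⊔ B) (A ⊓ B)) : FDQ A B := by
  have h1 : FDQ A (A ⊓ B) := fdq_mono_num _ le_sup_left h
  exact fdq_mono_den _ (le_trans inf_le_left inf_le_right) h1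

private theorem fdq_comm_symm {A B : Submodule ℂ H} (h : FDQ (A ⊔ B) (A ⊓ B)) :
    FDQ (B ⊔ A) (B ⊓ A) := by
  rwa [sup_comm, inf_comm]

end Aux

/-- Two subspaces `K₁, K₂` of a `ℂ`-vector space `H` are *commensurable* if the quotient
`(K₁ + K₂)/(K₁ ∩ K₂)` is finite dimensional. -/
def CommensurableSubspaces (H : Type*) [AddCommGroup H] [Module ℂ H]
    (K₁ K₂ : Submodule ℂ H) : Prop :=
  FiniteDimensional ℂ (↥(K₁ ⊔ K₂) ⧸ (K₁ ⊓ K₂).comap (K₁ ⊔ K₂).subtype)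

/-- Let `H` be a `ℂ`-vector space with a fixed subspace `H⁺`; call a subspace `K` *compact*
if it is commensurable with `H⁺`. A subspace `D` is *discrete* (i.e. there is a compact
subspace `K` with `D ∩ K = 0` and `D + K = H`, so the natural map `D ⊕ K → H` is an
isomorphism) if and only if for every compact subspace `K`, both `D ∩ K` and `H/(D + K)`
are finite dimensional. -/
theorem discrete_iff_finite_against_all_compacts
    (H : Type*) [AddCommGroup H] [Module ℂ H] (Hplus D : Submodule ℂ H) :
    (∃ K : Submodule ℂ H, CommensurableSubspaces H K Hplus ∧ D ⊓ K = ⊥ ∧ D ⊔ K = ⊤) ↔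
    (∀ K : Submodule ℂ H, CommensurableSubspaces H K Hplus →
      FiniteDimensional ℂ ↥(D ⊓ K) ∧ FiniteDimensional ℂ (H ⧸ (D ⊔ K))) := by
  constructor
  · rintro ⟨K₀, hK₀, hdisj, hsup⟩ K hK
    have hK₀' : FDQ (K₀ ⊔ Hplus) (K₀ ⊓ Hplus) := hK₀
    have hK' : FDQ (K ⊔ Hplus) (K ⊓ Hplus) := hK
    -- commensurability of K and K₀ via Hplus
    have hHK₀ : FDQ Hplus K₀ := fdq_of_comm (fdq_comm_symm hK₀')
    have hKH : FDQ K Hplus := fdq_of_comm hK'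
    have hKK₀ : FDQ K K₀ := fdq_trans hKH hHK₀
    have hHK : FDQ Hplus K := fdq_of_comm (fdq_comm_symm hK')
    have hK₀H : FDQ K₀ Hplus := fdq_of_comm hK₀'
    have hK₀K : FDQ K₀ K := fdq_trans hK₀H hHK
    constructor
    · -- D ⊓ K finite dimensional
      have h1 : FDQ (D ⊓ K) K₀ := fdq_mono_num _ inf_le_right hKK₀
      have hd : K₀ ⊓ (D ⊓ K) = ⊥ := by
        rw [eq_bot_iff, ← hdisj]
        exact le_inf (inf_le_right.trans inf_le_left) inf_le_left
      exact fd_of_fdq_disj hd h1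
    · -- H ⧸ (D ⊔ K) finite dimensional
      have hK₀KK₀ : FDQ K₀ (K ⊓ K₀) := fdq_mono_den _ le_rfl hK₀K
      have h1 : FDQ K₀ (D ⊔ K ⊓ K₀) :=
        fdq_mono_den _ (le_trans inf_le_left le_sup_right) hK₀KK₀
      have h3 : FDQ ((D ⊔ K ⊓ K₀) ⊔ K₀) (D ⊔ K ⊓ K₀) := fdq_sup _ (fdq_self _) h1
      have htop : (D ⊔ K ⊓ K₀) ⊔ K₀ = ⊤ := by
        rw [sup_assoc, sup_eq_right.mpr (inf_le_right : K ⊓ K₀ ≤ K₀), hsup]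
      rw [htop] at h3
      have h4 : FDQ ⊤ (D ⊔ K) :=
        fdq_mono_den _ (le_trans inf_le_left (sup_le_sup_left inf_le_left _)) h3
      exact (fdq_top_iff _).mp h4
  · intro h
    have hHc : CommensurableSubspaces H Hplus Hplus := by
      have : FDQ (Hplus ⊔ Hplus) (Hplus ⊓ Hplus) := by
        rw [sup_idem, inf_idem]; exact fdq_self _
      exact this
    obtain ⟨hF, hQ⟩ := h Hplus hHc
    -- complement K₁ of D ⊓ Hplus inside Hplus
    obtain ⟨C', hC'⟩ := Submodule.exists_isCompl ((D ⊓ Hplus).comap Hplus.subtype)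
    set K₁ : Submodule ℂ H := C'.map Hplus.subtype with hK₁def
    have hK₁le : K₁ ≤ Hplus := Submodule.map_subtype_le _ _
    have hFK₁ : (D ⊓ Hplus) ⊔ K₁ = Hplus := by
      have h0 := congrArg (Submodule.map Hplus.subtype) hC'.sup_eq_top
      rw [Submodule.map_sup, Submodule.map_comap_subtype, Submodule.map_top,
        Submodule.range_subtype, inf_eq_right.mpr (inf_le_right : D ⊓ Hplus ≤ Hplus)] at h0
      exact h0
    have hdisjK₁ : D ⊓ K₁ = ⊥ := by
      have h0 := congrArg (Submodule.map Hplus.subtype) hC'.inf_eq_bot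
      rw [Submodule.map_inf _ Hplus.injective_subtype, Submodule.map_comap_subtype,
        Submodule.map_bot, inf_eq_right.mpr (inf_le_right : D ⊓ Hplus ≤ Hplus)] at h0
      calc D ⊓ K₁ = D ⊓ (Hplus ⊓ K₁) := by rw [inf_eq_right.mpr hK₁le]
        _ = (D ⊓ Hplus) ⊓ K₁ := by rw [inf_assoc]
        _ = ⊥ := h0
    have hsupK₁ : D ⊔ K₁ = D ⊔ Hplus := by
      refine le_antisymm (sup_le_sup_left hK₁le D) ?_
      rw [← hFK₁]
      exact sup_le le_sup_left
        (sup_le (le_trans inf_le_left le_sup_left) le_sup_right)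
    have hQ' : FiniteDimensional ℂ (H ⧸ (D ⊔ K₁)) := by rw [hsupK₁]; exact hQ
    obtain ⟨W, hW⟩ := Submodule.exists_isCompl (D ⊔ K₁)
    haveI hWfd : FiniteDimensional ℂ ↥W := by
      haveI := hQ'
      exact (Submodule.quotientEquivOfIsCompl _ _ hW).finiteDimensional
    refine ⟨K₁ ⊔ W, ?_, ?_, ?_⟩
    · -- compactness of K₁ ⊔ W
      have hsupEq : (K₁ ⊔ W) ⊔ Hplus = Hplus ⊔ W := by
        rw [sup_right_comm, sup_eq_right.mpr hK₁le, sup_comm Hplus W]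
      have h1 : FDQ Hplus K₁ := by
        haveI := hF
        rw [← hFK₁]
        exact fdq_sup _ (fdq_of_fd _ _) (fdq_self _)
      have h2 : FDQ (Hplus ⊔ W) K₁ := fdq_sup _ h1 (fdq_of_fd _ _)
      have h3 : FDQ ((K₁ ⊔ W) ⊔ Hplus) K₁ := by rw [hsupEq]; exact h2
      have h4 : FDQ ((K₁ ⊔ W) ⊔ Hplus) ((K₁ ⊔ W) ⊓ Hplus) :=
        fdq_mono_den _ (inf_le_left.trans (le_inf le_sup_left hK₁le)) h3
      exact h4
    · -- D ⊓ (K₁ ⊔ W) = ⊥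
      rw [eq_bot_iff]
      intro x hx
      obtain ⟨hxD, hxK⟩ := Submodule.mem_inf.mp hx
      obtain ⟨k, hk, w, hw, rfl⟩ := Submodule.mem_sup.mp hxK
      have hwT : w ∈ D ⊔ K₁ := by
        have hsub : (k + w) - k ∈ D ⊔ K₁ :=
          Submodule.sub_mem _ (Submodule.mem_sup_left hxD) (Submodule.mem_sup_right hk)
        simpa using hsub
      have hw0 : w = 0 := by
        have hmem : w ∈ (D ⊔ K₁) ⊓ W := Submodule.mem_inf.mpr ⟨hwT, hw⟩
        rwa [hW.inf_eq_bot, Submodule.mem_bot] at hmem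
      rw [hw0, add_zero] at hxD ⊢
      have hmem : k ∈ D ⊓ K₁ := Submodule.mem_inf.mpr ⟨hxD, hk⟩
      rwa [hdisjK₁] at hmem
    · -- D ⊔ (K₁ ⊔ W) = ⊤
      rw [← sup_assoc, hW.sup_eq_top]
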